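/- Let L : X → X be a linear averaged nonexpansive operator on a real Hilbert space X. Then for every x ∈ X, the iterates L^k x converge strongly to P_{Fix L}(x). -/

import Mathlib

open Filter

variable {X : Type*} [NormedAddCommGroup X] [InnerProductSpace ℝ X] [CompleteSpace X]

/-- The fixed-point set `Fix L = {x : L x = x}` of a continuous linear operator,
as a (closed) subspace. -/
noncomputable def fixSpace (L : X →L[ℝ] X) : Submodule ℝ X :=
  LinearMap.ker ((ContinuousLinearMap.id ℝ X - L : X →L[ℝ] X) : X →ₗ[ℝ] X)

instance (L : X →L[ℝ] X) : CompleteSpace (fixSpace L) :=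
  (ContinuousLinearMap.isClosed_ker (ContinuousLinearMap.id ℝ X - L)).completeSpace_coe

/-- Key inequality for averaged operators. -/
lemma stmt7_key (L N : X →L[ℝ] X) (α : ℝ) (hα0 : 0 < α) (hα1 : α < 1)
    (hN : ∀ x, ‖N x‖ ≤ ‖x‖)
    (hL : L = (1 - α) • ContinuousLinearMap.id ℝ X + α • N) (z : X) :
    ‖L z‖ ^ 2 + ((1 - α) / α) * ‖z - L z‖ ^ 2 ≤ ‖z‖ ^ 2 := by
  have hLz : L z = (1 - α) • z + α • N z := by
    rw [hL]; simp
  have hsub : z - L z = α • (z - N z) := by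
    rw [hLz, smul_sub]; module
  have e1 : ‖L z‖ ^ 2
      = (1-α)^2*‖z‖^2 + 2*(α*(1-α))*(inner ℝ z (N z) : ℝ) + α^2*‖N z‖^2 := by
    rw [hLz, ← real_inner_self_eq_norm_sq, ← real_inner_self_eq_norm_sq,
      ← real_inner_self_eq_norm_sq]
    simp [inner_add_add_self, real_inner_smul_left, real_inner_smul_right,
      real_inner_comm z (N z)]
    rw [norm_add_sq_real, norm_smul, norm_smul, real_inner_smul_left, real_inner_smul_right,
      Real.norm_eq_abs, Real.norm_eq_abs, abs_of_pos hα0, abs_of_pos (by linarith : (0:ℝ) < 1 - α)]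
    ring
  have e2 : ‖z - L z‖ ^ 2 = α^2 * (‖z‖^2 - 2*(inner ℝ z (N z) : ℝ) + ‖N z‖^2) := by
    rw [hsub, norm_smul, mul_pow, norm_sub_sq_real, Real.norm_eq_abs, abs_of_pos hα0]
  have hb : ‖N z‖ ^ 2 ≤ ‖z‖ ^ 2 := by
    have := hN z
    nlinarith [norm_nonneg (N z), norm_nonneg z]
  rw [e1, e2]
  have h1 : (1 - α) / α * (α ^ 2 * (‖z‖^2 - 2*(inner ℝ z (N z) : ℝ) + ‖N z‖^2))
      = α * (1 - α) * (‖z‖^2 - 2*(inner ℝ z (N z) : ℝ) + ‖N z‖^2) := by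
    field_simp
  rw [h1]
  nlinarith [mul_le_mul_of_nonneg_left hb hα0.le]

lemma stmt7_nonexp (L N : X →L[ℝ] X) (α : ℝ) (hα0 : 0 < α) (hα1 : α < 1)
    (hN : ∀ x, ‖N x‖ ≤ ‖x‖)
    (hL : L = (1 - α) • ContinuousLinearMap.id ℝ X + α • N) (z : X) :
    ‖L z‖ ≤ ‖z‖ := by
  have h := stmt7_key L N α hα0 hα1 hN hL z
  have h2 : ‖L z‖ ^ 2 ≤ ‖z‖ ^ 2 := by
    nlinarith [sq_nonneg ‖z - L z‖, div_nonneg (by linarith : (0:ℝ) ≤ 1 - α) hα0.le]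
  exact (pow_le_pow_iff_left₀ (norm_nonneg _) (norm_nonneg _) two_ne_zero).mp h2

/-- The iterates of the displacement tend to zero. -/
lemma stmt7_asymp (L N : X →L[ℝ] X) (α : ℝ) (hα0 : 0 < α) (hα1 : α < 1)
    (hN : ∀ x, ‖N x‖ ≤ ‖x‖)
    (hL : L = (1 - α) • ContinuousLinearMap.id ℝ X + α • N) (z : X) :
    Tendsto (fun k : ℕ => (L ^ k) (z - L z)) atTop (nhds 0) := by
  set c : ℝ := (1 - α) / α with hc
  have hcpos : 0 < c := div_pos (by linarith) hα0
  have hv : ∀ k : ℕ, (L ^ k) (z - L z) = (L ^ k) z - (L ^ (k+1)) z := by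
    intro k
    rw [map_sub, pow_succ, ContinuousLinearMap.mul_apply]
  set d : ℕ → ℝ := fun k => ‖(L ^ k) z - (L ^ (k+1)) z‖ ^ 2 with hd
  have hstep : ∀ k : ℕ, ‖(L ^ (k+1)) z‖ ^ 2 + c * d k ≤ ‖(L ^ k) z‖ ^ 2 := by
    intro k
    have h := stmt7_key L N α hα0 hα1 hN hL ((L ^ k) z)
    have hLk : L ((L ^ k) z) = (L ^ (k+1)) z := by
      rw [pow_succ', ContinuousLinearMap.mul_apply]
    rwa [hLk] at h
  have hpart : ∀ n : ℕ, ∑ i ∈ Finset.range n, d i ≤ ‖z‖ ^ 2 / c := by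
    intro n
    have htel : c * ∑ i ∈ Finset.range n, d i ≤ ‖z‖ ^ 2 - ‖(L ^ n) z‖ ^ 2 := by
      induction n with
      | zero => simp
      | succ n ih =>
        rw [Finset.sum_range_succ, mul_add]
        have := hstep n
        linarith
    have hnn : (0:ℝ) ≤ ‖(L ^ n) z‖ ^ 2 := sq_nonneg _
    rw [le_div_iff₀ hcpos]
    nlinarith [htel]
  have hsumm : Summable d := summable_of_sum_range_le (fun k => sq_nonneg _) hpart
  have hd0 : Tendsto d atTop (nhds 0) := hsumm.tendsto_atTop_zero
  rw [tendsto_zero_iff_norm_tendsto_zero]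
  have h : Tendsto (fun k => Real.sqrt (d k)) atTop (nhds (Real.sqrt 0)) := hd0.sqrt
  rw [Real.sqrt_zero] at h
  apply h.congr
  intro k
  rw [hd]
  simp only []
  rw [Real.sqrt_sq (norm_nonneg _), hv]

/-- if `L = (1−α)Id + αN` is a linear averaged nonexpansive operator on a real
Hilbert space (`0 < α < 1`, `N` linear nonexpansive), then for every `x` the iterates `L^k x`
converge strongly to `P_{Fix L} x`. -/
theorem stmt7 (L N : X →L[ℝ] X) (α : ℝ) (hα0 : 0 < α) (hα1 : α < 1)
    (hN : ∀ x, ‖N x‖ ≤ ‖x‖)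
    (hL : L = (1 - α) • ContinuousLinearMap.id ℝ X + α • N) (x : X) :
    Tendsto (fun k : ℕ => (L ^ k) x) atTop
      (nhds ((fixSpace L).orthogonalProjectionOnto x : X)) := by
  have hnonexp := stmt7_nonexp L N α hα0 hα1 hN hL
  have hiter : ∀ (z : X) (k : ℕ), ‖(L ^ k) z‖ ≤ ‖z‖ := by
    intro z k
    induction k with
    | zero => simp
    | succ k ih =>
      rw [pow_succ', ContinuousLinearMap.mul_apply]
      exact (hnonexp _).trans ih
  set R : Submodule ℝ X := LinearMap.range ((ContinuousLinearMap.id ℝ X - L : X →L[ℝ] X) : X →ₗ[ℝ] X) with hR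
  have hRorth : Rᗮ ≤ fixSpace L := by
    intro u hu
    have hmem : u - L u ∈ R := ⟨u, by simp⟩
    have h0 : (inner ℝ u (u - L u) : ℝ) = 0 := by
      have h := (Submodule.mem_orthogonal R u).mp hu _ hmem
      rw [real_inner_comm]; exact h
    have hinner : (inner ℝ u (L u) : ℝ) = ‖u‖ ^ 2 := by
      rw [inner_sub_right, real_inner_self_eq_norm_sq] at h0
      linarith
    have hnorm : ‖u - L u‖ ^ 2 ≤ 0 := by
      have e : ‖u - L u‖ ^ 2 = ‖u‖ ^ 2 - 2 * (inner ℝ u (L u) : ℝ) + ‖L u‖ ^ 2 :=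
        norm_sub_sq_real u (L u)
      have hle : ‖L u‖ ^ 2 ≤ ‖u‖ ^ 2 := by
        have := hnonexp u
        nlinarith [norm_nonneg (L u), norm_nonneg u]
      rw [e, hinner]
      linarith
    have hz : u - L u = 0 := by
      have h1 : ‖u - L u‖ ^ 2 = 0 := le_antisymm hnorm (sq_nonneg _)
      have h2 : ‖u - L u‖ = 0 := by
        exact pow_eq_zero_iff two_ne_zero |>.mp h1
      exact norm_eq_zero.mp h2
    show u ∈ LinearMap.ker ((ContinuousLinearMap.id ℝ X - L : X →L[ℝ] X) : X →ₗ[ℝ] X)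
    simp only [LinearMap.mem_ker]
    simpa using hz
  have horthle : (fixSpace L)ᗮ ≤ R.topologicalClosure := by
    rw [← Submodule.orthogonal_orthogonal_eq_closure]
    exact Submodule.orthogonal_le hRorth
  set p : X := ((fixSpace L).orthogonalProjectionOnto x : X) with hp
  have hpmem : p ∈ fixSpace L := ((fixSpace L).orthogonalProjectionOnto x).2
  have hLp : L p = p := by
    have h := hpmem
    simp only [fixSpace, LinearMap.mem_ker] at h
    have h2 : p - L p = 0 := by simpa using h
    exact (sub_eq_zero.mp h2).symm
  have hLkp : ∀ k : ℕ, (L ^ k) p = p := by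
    intro k
    induction k with
    | zero => simp
    | succ k ih => rw [pow_succ', ContinuousLinearMap.mul_apply, ih, hLp]
  have hy : x - p ∈ (fixSpace L)ᗮ := Submodule.sub_starProjection_mem_orthogonal x
  have hyc : x - p ∈ closure (R : Set X) := by
    have h := horthle hy
    have h2 : x - p ∈ (R.topologicalClosure : Set X) := h
    rwa [Submodule.topologicalClosure_coe] at h2
  have hzero : Tendsto (fun k : ℕ => (L ^ k) (x - p)) atTop (nhds 0) := by
    rw [Metric.tendsto_atTop]
    intro ε hε
    obtain ⟨v, hvR, hvclose⟩ := Metric.mem_closure_iff.mp hyc (ε/2) (by linarith)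
    rw [dist_eq_norm] at hvclose
    obtain ⟨w, hw⟩ := hvR
    have hveq : v = w - L w := by
      rw [← hw]; simp
    have hvten : Tendsto (fun k : ℕ => (L ^ k) v) atTop (nhds 0) := by
      have h := stmt7_asymp L N α hα0 hα1 hN hL w
      apply h.congr
      intro k
      rw [hveq]
    rw [Metric.tendsto_atTop] at hvten
    obtain ⟨M, hM⟩ := hvten (ε/2) (by linarith)
    refine ⟨M, fun k hk => ?_⟩
    rw [dist_zero_right]
    have hsplit : (L ^ k) (x - p) = (L ^ k) ((x - p) - v) + (L ^ k) v := by
      rw [← map_add, sub_add_cancel]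
    rw [hsplit]
    have h1 : ‖(L ^ k) ((x - p) - v)‖ ≤ ‖(x - p) - v‖ := hiter _ k
    have h2 := hM k hk
    rw [dist_zero_right] at h2
    calc ‖(L ^ k) ((x - p) - v) + (L ^ k) v‖
        ≤ ‖(L ^ k) ((x - p) - v)‖ + ‖(L ^ k) v‖ := norm_add_le _ _
      _ < ε := by linarith
  have hcongr : (fun k : ℕ => (L ^ k) x) = fun k : ℕ => p + (L ^ k) (x - p) := by
    funext k
    rw [map_sub, hLkp]
    abel
  rw [hcongr]
  have h := (tendsto_const_nhds (x := p) (f := atTop (α := ℕ))).add hzero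
  rwa [add_zero] at h
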